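/- Let H be a finite type and S ⊆ List H a set of words closed under taking sublists. Define the alternation of a word as the length of the word obtained by iteratively deleting letters equal to their predecessor (equivalently, the number of maximal constant blocks). If S contains words of arbitrarily large alternation, then there exist g ≠ h ∈ H such that for every n ∈ ℕ, the word (g h)^n (g followed by h, repeated n times) belongs to S. -/

import Mathlib

/-- The alternation of a word: the length after iteratively deleting letters
equal to their predecessor (the number of maximal constant blocks). -/
def alternation {H : Type*} [DecidableEq H] (w : List H) : ℕ :=
  (w.destutter (· ≠ ·)).length

namespace UAPaux
open List
set_option linter.unusedSectionVars false

variable {H : Type*} [DecidableEq H]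

def pairRep (g h : H) (n : ℕ) : List H := (List.replicate n ([g, h])).flatten

lemma pairRep_succ (g h : H) (n : ℕ) :
    pairRep g h (n + 1) = g :: h :: pairRep g h n := by
  simp [pairRep, List.replicate_succ]

lemma pairRep_length (g h : H) (n : ℕ) : (pairRep g h n).length = 2 * n := by
  induction n with
  | zero => simp [pairRep]
  | succ n ih => rw [pairRep_succ]; simp [ih]; ring

lemma pairRep_mono (g h : H) {m n : ℕ} (hmn : m ≤ n) :
    (pairRep g h m).Sublist (pairRep g h n) := by
  induction n with
  | zero => simp_all
  | succ n ih =>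
    rcases Nat.lt_or_ge m (n+1) with hl | hg
    · exact (ih (Nat.lt_succ_iff.mp hl)).trans
        (by rw [pairRep_succ]; exact ((List.sublist_cons_self _ _).trans
          (List.sublist_cons_self _ _)))
    · have : m = n + 1 := le_antisymm hmn hg
      subst this; exact List.Sublist.refl _

noncomputable def N (g h : H) (w : List H) : ℕ :=
  Nat.findGreatest (fun n => (pairRep g h n).Sublist w) w.length

lemma N_spec (g h : H) (w : List H) : (pairRep g h (N g h w)).Sublist w := by
  classical
  exact Nat.findGreatest_spec (P := fun n => (pairRep g h n).Sublist w)
    (Nat.zero_le _) (by simp [pairRep])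

lemma le_N {g h : H} {w : List H} {k : ℕ} (hk : (pairRep g h k).Sublist w) : k ≤ N g h w := by
  classical
  apply Nat.le_findGreatest _ hk
  have := hk.length_le
  rw [pairRep_length] at this
  omega

lemma N_mono (g h : H) {t w : List H} (h1 : t.Sublist w) : N g h t ≤ N g h w :=
  le_N ((N_spec g h t).trans h1)

lemma N_cons (a b : H) (t : List H) : N a b t + 1 ≤ N a b (a :: b :: t) := by
  apply le_N
  rw [pairRep_succ]
  exact (N_spec a b t).cons₂ _ |>.cons₂ _

variable [Fintype H]

lemma key : ∀ w : List H, w.Chain' (· ≠ ·) →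
    w.length ≤ 2 * ∑ p ∈ Finset.univ.filter (fun p : H × H => p.1 ≠ p.2),
      N p.1 p.2 w + 1 := by
  intro w
  match w with
  | [] => intro _; simp
  | [a] => intro _; simp
  | a :: b :: t =>
    intro hw
    have hab : a ≠ b := (List.isChain_cons_cons.mp hw).1
    have ht : t.Chain' (· ≠ ·) := ((List.isChain_cons_cons.mp hw).2).tail
    have ih := key t ht
    have hsum : ∑ p ∈ Finset.univ.filter (fun p : H × H => p.1 ≠ p.2), N p.1 p.2 t <
        ∑ p ∈ Finset.univ.filter (fun p : H × H => p.1 ≠ p.2), N p.1 p.2 (a :: b :: t) := by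
      apply Finset.sum_lt_sum
      · intro p _
        exact N_mono p.1 p.2 ((t.sublist_cons_self b).trans ((b :: t).sublist_cons_self a))
      · exact ⟨(a, b), by simp [hab],
          Nat.lt_of_lt_of_le (Nat.lt_succ_self _) (N_cons a b t)⟩
    simp only [List.length_cons]
    omega
termination_by w => w.length

end UAPaux

/-- If a subword-closed set of words over a finite alphabet has unbounded
alternation, then it contains all words `(g h)^n` for some fixed pair of
distinct letters `g ≠ h`. -/
theorem unbounded_alternation_pair {H : Type*} [Finite H] [DecidableEq H]
    (S : Set (List H))
    (hclosed : ∀ w ∈ S, ∀ u : List H, u.Sublist w → u ∈ S)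
    (hunb : ∀ n : ℕ, ∃ w ∈ S, n ≤ alternation w) :
    ∃ g h : H, g ≠ h ∧ ∀ n : ℕ, (List.replicate n ([g, h])).flatten ∈ S := by
  classical
  have : Fintype H := Fintype.ofFinite H
  open UAPaux in
  by_contra hcon
  push_neg at hcon
  -- for each pair with g ≠ h, get a bound n with pairRep g h n ∉ S
  have hb : ∀ p : H × H, p.1 ≠ p.2 → ∃ n, UAPaux.pairRep p.1 p.2 n ∉ S := by
    intro p hp
    obtain ⟨n, hn⟩ := hcon p.1 p.2 hp
    exact ⟨n, hn⟩
  choose! nb hnb using hb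
  set s := Finset.univ.filter (fun p : H × H => p.1 ≠ p.2) with hs
  set B := ∑ p ∈ s, nb p with hB
  obtain ⟨w, hwS, hwa⟩ := hunb (2 * B + 2)
  set d := w.destutter (· ≠ ·) with hd
  have hdS : d ∈ S := hclosed w hwS d (w.destutter_sublist _)
  have hdchain : d.Chain' (· ≠ ·) := w.isChain_destutter _
  have hkey := UAPaux.key d hdchain
  have hNle : ∀ p ∈ s, UAPaux.N p.1 p.2 d ≤ nb p := by
    intro p hp
    have hp' : p.1 ≠ p.2 := (Finset.mem_filter.mp hp).2
    by_contra hlt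
    push_neg at hlt
    have h1 : (UAPaux.pairRep p.1 p.2 (nb p)).Sublist d :=
      (UAPaux.pairRep_mono p.1 p.2 hlt.le).trans (UAPaux.N_spec p.1 p.2 d)
    exact hnb p hp' (hclosed d hdS _ h1)
  have hsum : ∑ p ∈ s, UAPaux.N p.1 p.2 d ≤ B := Finset.sum_le_sum hNle
  have : alternation w ≤ 2 * B + 1 := by
    calc alternation w = d.length := rfl
    _ ≤ 2 * ∑ p ∈ s, UAPaux.N p.1 p.2 d + 1 := hkey
    _ ≤ 2 * B + 1 := by omega
  omega
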